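/- Let A be a distributive meet-semilattice, Y a nonempty closed subset of X(A) and Z a special basic saturated subset of X(A). Then the filter F_Y = {a ∈ A : Y ⊆ β(a)} and the order ideal I_A(Z) = {a ∈ A : β(a) ∩ Z = ∅} satisfy: F_Y ∩ I_A(Z) = ∅ if and only if Y ∩ Z ≠ ∅. -/

import Mathlib

namespace DS

variable {A : Type*} [SemilatticeInf A] [OrderTop A]

/-- A filter: an upset containing the top element, closed under meets. -/
def IsFilt (F : Set A) : Prop :=
  IsUpperSet F ∧ ⊤ ∈ F ∧ ∀ ⦃a b : A⦄, a ∈ F → b ∈ F → a ⊓ b ∈ F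

/-- An irreducible (prime) filter: a proper filter that is meet-irreducible
among filters. -/
def IsIrred (F : Set A) : Prop :=
  IsFilt F ∧ F ≠ Set.univ ∧
    ∀ F₁ F₂ : Set A, IsFilt F₁ → IsFilt F₂ → F = F₁ ∩ F₂ → F = F₁ ∨ F = F₂

/-- An order ideal: a downset in which every pair of elements has an upper
bound in the set. -/
def IsOrdIdeal (I : Set A) : Prop :=
  IsLowerSet I ∧ ∀ a ∈ I, ∀ b ∈ I, ∃ c ∈ I, a ≤ c ∧ b ≤ c

/-- Distributivity for a meet-semilattice with top. -/
def IsDistrib (A : Type*) [SemilatticeInf A] [OrderTop A] : Prop :=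
  ∀ a b c : A, a ⊓ b ≤ c → ∃ a₁ b₁ : A, a ≤ a₁ ∧ b ≤ b₁ ∧ c = a₁ ⊓ b₁

/-- The set of irreducible filters of `A`, ordered by inclusion. -/
def Spec (A : Type*) [SemilatticeInf A] [OrderTop A] : Type _ :=
  {P : Set A // IsIrred P}

instance : PartialOrder (Spec A) := Subtype.partialOrder _

/-- `beta a` = the set of irreducible filters containing `a`. -/
def beta (a : A) : Set (Spec A) := {P : Spec A | a ∈ P.1}

/-- The topology on `Spec A` generated by the basis `{beta aᶜ : a ∈ A}`. -/
def specTop (A : Type*) [SemilatticeInf A] [OrderTop A] : TopologicalSpace (Spec A) :=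
  TopologicalSpace.generateFrom {s : Set (Spec A) | ∃ a : A, s = (beta a)ᶜ}

/-- Special basic saturated subsets: intersections of dually directed families
of basic opens `beta aᶜ`. -/
def SBS (Z : Set (Spec A)) : Prop :=
  ∃ L : Set A, (∀ a ∈ L, ∀ b ∈ L, ∃ c ∈ L, beta a ∪ beta b ⊆ beta c) ∧
    Z = ⋂ a ∈ L, (beta a)ᶜ

/-- The order ideal associated to a special basic saturated set. -/
def IA (Z : Set (Spec A)) : Set A := {a : A | beta a ∩ Z = ∅}

/-- The special basic saturated set associated to an order ideal. -/
def alphaI (I : Set A) : Set (Spec A) := {P : Spec A | P.1 ∩ I = ∅}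

/-- The filter associated to a closed set. -/
def FY (Y : Set (Spec A)) : Set A := {a : A | Y ⊆ beta a}

/-- The multirelation `R_m` on the dual space. -/
def Rm (m : A → A) (P : Spec A) (Z : Set (Spec A)) : Prop :=
  {a : A | m a ∈ P.1} ∩ IA Z = ∅

/-- The multirelation `G_m` on the dual space. -/
def Gm (m : A → A) (P : Spec A) (Y : Set (Spec A)) : Prop :=
  FY Y ⊆ {a : A | m a ∈ P.1}

/-- The composed relation `R_m²`. -/
def Rm2 (m : A → A) (P : Spec A) (Z : Set (Spec A)) : Prop :=
  ∃ S : Set (Spec A), SBS S ∧ Rm m P S ∧ ∀ x ∈ S, Rm m x Z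

end DS

namespace DS

variable {A : Type*} [SemilatticeInf A] [OrderTop A]

lemma beta_mono {a b : A} (h : a ≤ b) : beta a ⊆ beta b := fun P hP => P.2.1.1 h hP

lemma beta_top : beta (⊤ : A) = Set.univ :=
  Set.eq_univ_of_forall fun P => P.2.1.2.1

lemma mem_inf_iff (P : Spec A) (a b : A) : a ⊓ b ∈ P.1 ↔ a ∈ P.1 ∧ b ∈ P.1 :=
  ⟨fun h => ⟨P.2.1.1 inf_le_left h, P.2.1.1 inf_le_right h⟩,
   fun ⟨h1, h2⟩ => P.2.1.2.2 h1 h2⟩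

lemma beta_inf (a b : A) : beta (a ⊓ b) = beta a ∩ beta b := by
  ext P; exact mem_inf_iff P a b

lemma isFilt_genF {Q : Set A} (hQ : IsFilt Q) (x : A) :
    IsFilt {z : A | ∃ q ∈ Q, q ⊓ x ≤ z} := by
  refine ⟨fun u v huv hu => ?_, ⟨⊤, hQ.2.1, le_top⟩, ?_⟩
  · obtain ⟨q, hq, h⟩ := hu; exact ⟨q, hq, h.trans huv⟩
  · rintro u v ⟨q1, hq1, h1⟩ ⟨q2, hq2, h2⟩
    exact ⟨q1 ⊓ q2, hQ.2.2 hq1 hq2,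
      le_inf ((inf_le_inf_right x inf_le_left).trans h1)
        ((inf_le_inf_right x inf_le_right).trans h2)⟩

/-- Prime filter separation theorem in `A`. -/
lemma sep (hA : IsDistrib A) {F I : Set A} (hF : IsFilt F) (hId : IsLowerSet I)
    (hdir : ∀ a ∈ I, ∀ b ∈ I, ∃ c ∈ I, a ≤ c ∧ b ≤ c) (hIne : I.Nonempty)
    (hdisj : ∀ x ∈ F, x ∉ I) :
    ∃ P : Spec A, F ⊆ P.1 ∧ ∀ x ∈ P.1, x ∉ I := by
  have hchainub : ∀ C ⊆ {G : Set A | IsFilt G ∧ F ⊆ G ∧ ∀ x ∈ G, x ∉ I},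
      IsChain (· ⊆ ·) C → C.Nonempty →
      ∃ ub ∈ {G : Set A | IsFilt G ∧ F ⊆ G ∧ ∀ x ∈ G, x ∉ I}, ∀ s ∈ C, s ⊆ ub := by
    intro C hC hchain hCne
    obtain ⟨G0, hG0⟩ := hCne
    refine ⟨⋃₀ C, ⟨⟨?_, ?_, ?_⟩, ?_, ?_⟩, fun s hs => Set.subset_sUnion_of_mem hs⟩
    · rintro u v huv ⟨G, hG, hu⟩
      exact ⟨G, hG, (hC hG).1.1 huv hu⟩
    · exact ⟨G0, hG0, (hC hG0).1.2.1⟩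
    · rintro u v ⟨G1, hG1, hu⟩ ⟨G2, hG2, hv⟩
      rcases hchain.total hG1 hG2 with h | h
      · exact ⟨G2, hG2, (hC hG2).1.2.2 (h hu) hv⟩
      · exact ⟨G1, hG1, (hC hG1).1.2.2 hu (h hv)⟩
    · exact fun u hu => ⟨G0, hG0, (hC hG0).2.1 hu⟩
    · rintro x ⟨G, hG, hx⟩
      exact (hC hG).2.2 x hx
  obtain ⟨Q, hFQ, hQmax⟩ := zorn_subset_nonempty
      {G : Set A | IsFilt G ∧ F ⊆ G ∧ ∀ x ∈ G, x ∉ I} hchainub F ⟨hF, subset_rfl, hdisj⟩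
  obtain ⟨hQfilt, hFQ', hQI⟩ := hQmax.1
  obtain ⟨c0, hc0⟩ := hIne
  have hQne : Q ≠ Set.univ := fun h => hQI c0 (h ▸ Set.mem_univ c0) hc0
  refine ⟨⟨Q, hQfilt, hQne, ?_⟩, hFQ', hQI⟩
  intro F₁ F₂ h₁ h₂ heq
  by_contra hne
  push_neg at hne
  have hQ1 : Q ⊆ F₁ := heq ▸ Set.inter_subset_left
  have hQ2 : Q ⊆ F₂ := heq ▸ Set.inter_subset_right
  obtain ⟨x, hx1, hxQ⟩ := Set.exists_of_ssubset (hQ1.ssubset_of_ne hne.1)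
  obtain ⟨y, hy2, hyQ⟩ := Set.exists_of_ssubset (hQ2.ssubset_of_ne hne.2)
  have hext : ∀ w : A, w ∉ Q → ∃ z ∈ I, ∃ q ∈ Q, q ⊓ w ≤ z := by
    intro w hw
    by_contra hcon
    push_neg at hcon
    have hmem : {z : A | ∃ q ∈ Q, q ⊓ w ≤ z} ∈
        {G : Set A | IsFilt G ∧ F ⊆ G ∧ ∀ x ∈ G, x ∉ I} := by
      refine ⟨isFilt_genF hQfilt w, fun u hu => ⟨u, hFQ' hu, inf_le_left⟩, ?_⟩
      rintro z ⟨q, hq, hqz⟩ hz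
      exact (hcon z hz q hq) hqz
    have hsub : Q ⊆ {z : A | ∃ q ∈ Q, q ⊓ w ≤ z} :=
      fun q hq => ⟨q, hq, inf_le_left⟩
    have := hQmax.2 hmem hsub
    exact hw (this ⟨⊤, hQfilt.2.1, inf_le_right⟩)
  obtain ⟨z1, hz1, q1, hq1, hle1⟩ := hext x hxQ
  obtain ⟨z2, hz2, q2, hq2, hle2⟩ := hext y hyQ
  obtain ⟨c, hc, hzc1, hzc2⟩ := hdir z1 hz1 z2 hz2
  have hq : q1 ⊓ q2 ∈ Q := hQfilt.2.2 hq1 hq2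
  have h1c : (q1 ⊓ q2) ⊓ x ≤ c :=
    ((inf_le_inf_right x inf_le_left).trans hle1).trans hzc1
  have h2c : (q1 ⊓ q2) ⊓ y ≤ c :=
    ((inf_le_inf_right y inf_le_right).trans hle2).trans hzc2
  obtain ⟨r1, s1, hr1, hs1, hceq1⟩ := hA (q1 ⊓ q2) x c h1c
  obtain ⟨r2, s2, hr2, hs2, hceq2⟩ := hA (q1 ⊓ q2) y c h2c
  have hcF1 : c ∈ F₁ := by
    rw [hceq1]; exact h₁.2.2 (h₁.1 hr1 (hQ1 hq)) (h₁.1 hs1 hx1)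
  have hcF2 : c ∈ F₂ := by
    rw [hceq2]; exact h₂.2.2 (h₂.1 hr2 (hQ2 hq)) (h₂.1 hs2 hy2)
  have hcQ : c ∈ Q := by rw [heq]; exact ⟨hcF1, hcF2⟩
  exact hQI c hcQ hc

lemma beta_le_iff (hA : IsDistrib A) {a b : A} : beta a ⊆ beta b ↔ a ≤ b := by
  constructor
  · intro h
    by_contra hab
    obtain ⟨P, hFP, hPI⟩ := sep hA (F := {x : A | a ≤ x}) (I := {x : A | x ≤ b})
      ⟨fun u v huv hu => hu.trans huv, le_top, fun u v h1 h2 => le_inf h1 h2⟩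
      (fun u v hvu hu => hvu.trans hu)
      (fun x hx y hy => ⟨b, le_rfl, hx, hy⟩) ⟨b, le_rfl⟩
      (fun x hx hxb => hab (hx.trans hxb))
    exact hPI b (h (hFP le_rfl)) le_rfl
  · exact fun h => beta_mono h

/-- The lattice of finite unions of `beta` sets. -/
def Dlat (A : Type*) [SemilatticeInf A] [OrderTop A] : Set (Set (Spec A)) :=
  {U | ∃ T : Finset A, U = ⋃ a ∈ T, beta a}

lemma univ_mem_Dlat : Set.univ ∈ Dlat A := by
  refine ⟨{⊤}, ?_⟩
  simp [beta_top]

lemma empty_mem_Dlat : (∅ : Set (Spec A)) ∈ Dlat A := ⟨∅, by simp⟩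

lemma beta_mem_Dlat (a : A) : beta a ∈ Dlat A := ⟨{a}, by simp⟩

lemma union_mem_Dlat {U V : Set (Spec A)} (hU : U ∈ Dlat A) (hV : V ∈ Dlat A) :
    U ∪ V ∈ Dlat A := by
  classical
  obtain ⟨T1, rfl⟩ := hU; obtain ⟨T2, rfl⟩ := hV
  refine ⟨T1 ∪ T2, ?_⟩
  ext P
  simp only [Set.mem_union, Set.mem_iUnion, Finset.mem_union, exists_prop]
  rw [← exists_or]
  exact exists_congr fun a => (or_and_right).symm

lemma inter_mem_Dlat {U V : Set (Spec A)} (hU : U ∈ Dlat A) (hV : V ∈ Dlat A) :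
    U ∩ V ∈ Dlat A := by
  classical
  obtain ⟨T1, rfl⟩ := hU; obtain ⟨T2, rfl⟩ := hV
  refine ⟨(T1 ×ˢ T2).image fun p => p.1 ⊓ p.2, ?_⟩
  ext P
  simp only [Set.mem_inter_iff, Set.mem_iUnion, Finset.mem_image, Finset.mem_product,
    exists_prop, Prod.exists]
  constructor
  · rintro ⟨⟨a, ha, haP⟩, ⟨b, hb, hbP⟩⟩
    exact ⟨a ⊓ b, ⟨a, b, ⟨ha, hb⟩, rfl⟩, (mem_inf_iff P a b).mpr ⟨haP, hbP⟩⟩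
  · rintro ⟨c, ⟨a, b, ⟨ha, hb⟩, rfl⟩, hc⟩
    obtain ⟨haP, hbP⟩ := (mem_inf_iff P a b).mp hc
    exact ⟨⟨a, ha, haP⟩, ⟨b, hb, hbP⟩⟩

lemma gen_open_nbhd {U : Set (Spec A)}
    (hU : TopologicalSpace.GenerateOpen {s : Set (Spec A) | ∃ a : A, s = (beta a)ᶜ} U) :
    ∀ Q ∈ U, ∃ T : Finset A, (∀ a ∈ T, a ∉ Q.1) ∧
      ∀ R : Spec A, (∀ a ∈ T, a ∉ R.1) → R ∈ U := by
  induction hU with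
  | basic s hs =>
    obtain ⟨a, rfl⟩ := hs
    intro Q hQ
    refine ⟨{a}, ?_, ?_⟩
    · intro b hb
      rw [Finset.mem_singleton] at hb
      subst hb
      exact hQ
    · intro R hR
      exact hR a (Finset.mem_singleton_self a)
  | univ =>
    intro Q _
    exact ⟨∅, by simp, fun R _ => trivial⟩
  | inter U V hU hV ihU ihV =>
    intro Q hQ
    obtain ⟨T₁, h₁, g₁⟩ := ihU Q hQ.1
    obtain ⟨T₂, h₂, g₂⟩ := ihV Q hQ.2
    classical
    refine ⟨T₁ ∪ T₂, ?_, ?_⟩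
    · intro a ha
      rcases Finset.mem_union.1 ha with h | h
      · exact h₁ a h
      · exact h₂ a h
    · intro R hR
      exact ⟨g₁ R fun a ha => hR a (Finset.mem_union_left _ ha),
        g₂ R fun a ha => hR a (Finset.mem_union_right _ ha)⟩
  | sUnion S hS ih =>
    intro Q hQ
    obtain ⟨s, hs, hQs⟩ := hQ
    obtain ⟨T, h₁, g⟩ := ih s hs Q hQs
    exact ⟨T, h₁, fun R hR => ⟨s, hs, g R hR⟩⟩

end DS

open DS Set


theorem stmt5 {A : Type*} [SemilatticeInf A] [OrderTop A] (hA : IsDistrib A)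
    (Y Z : Set (Spec A)) (hY : @IsClosed (Spec A) (specTop A) Y) (hYne : Y.Nonempty)
    (hZ : SBS Z) :
    FY Y ∩ IA Z = ∅ ↔ (Y ∩ Z).Nonempty := by
  constructor
  · intro hdisj
    obtain ⟨L, hLdir, hZL⟩ := hZ
    have hdisj' : ∀ l : A, Y ⊆ beta l → beta l ∩ Z ≠ ∅ := by
      intro l h1 h2
      have hmem : l ∈ FY Y ∩ IA Z := ⟨h1, h2⟩
      rw [hdisj] at hmem
      exact hmem
    rcases L.eq_empty_or_nonempty with rfl | ⟨l₀, hl₀⟩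
    · obtain ⟨P, hP⟩ := hYne
      exact ⟨P, hP, by rw [hZL]; simp⟩
    · have hZl : ∀ l ∈ L, beta l ∩ Z = ∅ := by
        intro l hl
        rw [hZL]
        ext P
        simp only [Set.mem_inter_iff, Set.mem_empty_iff_false, iff_false, not_and]
        intro hPl hPZ
        exact (Set.mem_iInter₂.1 hPZ l hl) hPl
      have hkey : ∀ l ∈ L, ¬ Y ⊆ beta l := fun l hl hY1 => hdisj' l hY1 (hZl l hl)
      set J : Set (Set (Spec A)) := {U | U ∈ Dlat A ∧ ∃ l ∈ L, U ⊆ beta l} with hJ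
      set SS : Set (Set (Set (Spec A))) :=
        {G | G ⊆ Dlat A ∧ Set.univ ∈ G ∧
          (∀ U ∈ G, ∀ V ∈ Dlat A, U ⊆ V → V ∈ G) ∧
          (∀ U ∈ G, ∀ V ∈ G, U ∩ V ∈ G) ∧
          {U | U ∈ Dlat A ∧ Y ⊆ U} ⊆ G ∧ ∀ U ∈ G, U ∉ J} with hSS
      have hFmem : {U | U ∈ Dlat A ∧ Y ⊆ U} ∈ SS := by
        refine ⟨fun U hU => hU.1, ⟨univ_mem_Dlat, Set.subset_univ Y⟩, ?_, ?_, subset_rfl, ?_⟩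
        · exact fun U hU V hV hUV => ⟨hV, hU.2.trans hUV⟩
        · exact fun U hU V hV => ⟨inter_mem_Dlat hU.1 hV.1, Set.subset_inter hU.2 hV.2⟩
        · rintro U ⟨_, hYU⟩ ⟨_, l, hl, hUl⟩
          exact hkey l hl (hYU.trans hUl)
      have hchainD : ∀ C ⊆ SS, IsChain (· ⊆ ·) C → C.Nonempty →
          ∃ ub ∈ SS, ∀ s ∈ C, s ⊆ ub := by
        intro C hC hchain hCne
        obtain ⟨G0, hG0⟩ := hCne
        refine ⟨⋃₀ C, ⟨?_, ?_, ?_, ?_, ?_, ?_⟩, fun s hs => Set.subset_sUnion_of_mem hs⟩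
        · rintro U ⟨G, hG, hU⟩
          exact (hC hG).1 hU
        · exact ⟨G0, hG0, (hC hG0).2.1⟩
        · rintro U ⟨G, hG, hU⟩ V hV hUV
          exact ⟨G, hG, (hC hG).2.2.1 U hU V hV hUV⟩
        · rintro U ⟨G1, hG1, hU⟩ V ⟨G2, hG2, hV⟩
          rcases hchain.total hG1 hG2 with h | h
          · exact ⟨G2, hG2, (hC hG2).2.2.2.1 U (h hU) V hV⟩
          · exact ⟨G1, hG1, (hC hG1).2.2.2.1 U hU V (h hV)⟩
        · exact fun U hU => ⟨G0, hG0, (hC hG0).2.2.2.2.1 hU⟩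
        · rintro U ⟨G, hG, hU⟩
          exact (hC hG).2.2.2.2.2 U hU
      obtain ⟨PP, hFPP, hPPmax⟩ := zorn_subset_nonempty SS hchainD _ hFmem
      obtain ⟨hPD, hPuniv, hPup, hPint, hPF, hPJ⟩ := hPPmax.1
      have hPG : ∀ W0 : Set (Spec A), PP ⊆ {X | X ∈ Dlat A ∧ ∃ W ∈ PP, W ∩ W0 ⊆ X} :=
        fun W0 W hW => ⟨hPD hW, W, hW, Set.inter_subset_left⟩
      have hext : ∀ W0 ∈ Dlat A, W0 ∉ PP → ∃ X ∈ J, ∃ W ∈ PP, W ∩ W0 ⊆ X := by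
        intro W0 hW0D hW0
        by_contra hc
        push_neg at hc
        have hG' : {X | X ∈ Dlat A ∧ ∃ W ∈ PP, W ∩ W0 ⊆ X} ∈ SS := by
          refine ⟨fun X hX => hX.1, ⟨univ_mem_Dlat, Set.univ, hPuniv, Set.subset_univ _⟩,
            ?_, ?_, ?_, ?_⟩
          · rintro X ⟨hXD, W, hW, hWX⟩ V' hV' hXV'
            exact ⟨hV', W, hW, hWX.trans hXV'⟩
          · rintro X ⟨hXD, W1, hW1, h1⟩ X' ⟨hX'D, W2, hW2, h2⟩
            refine ⟨inter_mem_Dlat hXD hX'D, W1 ∩ W2, hPint _ hW1 _ hW2, ?_⟩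
            rintro p ⟨⟨hp1, hp2⟩, hp0⟩
            exact ⟨h1 ⟨hp1, hp0⟩, h2 ⟨hp2, hp0⟩⟩
          · exact fun U' hU' => hPG W0 (hPF hU')
          · rintro X ⟨hXD, W, hW, hWX⟩ hXJ
            exact hc X hXJ W hW hWX
        have hGP := hPPmax.2 hG' (hPG W0)
        exact hW0 (hGP ⟨hW0D, Set.univ, hPuniv, fun p hp => hp.2⟩)
      have hprime : ∀ U ∈ Dlat A, ∀ V ∈ Dlat A, U ∪ V ∈ PP → U ∈ PP ∨ V ∈ PP := by
        intro U hU V hV hUV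
        by_contra hcon
        push_neg at hcon
        obtain ⟨X1, ⟨_, l1, hl1, hX1l⟩, W1, hW1, h1⟩ := hext U hU hcon.1
        obtain ⟨X2, ⟨_, l2, hl2, hX2l⟩, W2, hW2, h2⟩ := hext V hV hcon.2
        obtain ⟨l3, hl3, hbl3⟩ := hLdir l1 hl1 l2 hl2
        have hW : (W1 ∩ W2) ∩ (U ∪ V) ∈ PP := hPint _ (hPint _ hW1 _ hW2) _ hUV
        have hsub : (W1 ∩ W2) ∩ (U ∪ V) ⊆ beta l3 := by
          rintro p ⟨⟨hp1, hp2⟩, hp | hp⟩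
          · exact hbl3 (Set.mem_union_left _ (hX1l (h1 ⟨hp1, hp⟩)))
          · exact hbl3 (Set.mem_union_right _ (hX2l (h2 ⟨hp2, hp⟩)))
        exact hPJ _ hW ⟨hPD hW, l3, hl3, hsub⟩
      have hempty : (∅ : Set (Spec A)) ∉ PP :=
        fun h => hPJ ∅ h ⟨empty_mem_Dlat, l₀, hl₀, Set.empty_subset _⟩
      have hbeta_mem : ∀ T : Finset A, (⋃ a ∈ T, beta a) ∈ PP → ∃ a ∈ T, beta a ∈ PP := by
        classical
        intro T
        induction T using Finset.induction_on with
        | empty =>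
          intro h
          rw [show (⋃ a ∈ (∅ : Finset A), beta a) = (∅ : Set (Spec A)) by simp] at h
          exact absurd h hempty
        | insert _ _ hx ih =>
          intro h
          rw [Finset.set_biUnion_insert] at h
          rcases hprime _ (beta_mem_Dlat _) _ ⟨_, rfl⟩ h with h' | h'
          · exact ⟨_, Finset.mem_insert_self _ _, h'⟩
          · obtain ⟨b, hb, hbP⟩ := ih h'
            exact ⟨b, Finset.mem_insert_of_mem hb, hbP⟩
      set QS : Set A := {a : A | beta a ∈ PP} with hQS
      have hQfilt : IsFilt QS := by
        refine ⟨fun u v huv hu => hPup _ hu _ (beta_mem_Dlat v) (beta_mono huv), ?_, ?_⟩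
        · show beta (⊤ : A) ∈ PP
          rw [beta_top]
          exact hPuniv
        · intro a b ha hb
          show beta (a ⊓ b) ∈ PP
          rw [beta_inf]
          exact hPint _ ha _ hb
      have hlQ : ∀ l ∈ L, l ∉ QS :=
        fun l hl h => hPJ _ h ⟨beta_mem_Dlat l, l, hl, subset_rfl⟩
      have hQne : QS ≠ Set.univ := by
        intro h
        exact hlQ l₀ hl₀ (h ▸ Set.mem_univ l₀)
      have hQirr : ∀ F₁ F₂ : Set A, IsFilt F₁ → IsFilt F₂ → QS = F₁ ∩ F₂ →
          QS = F₁ ∨ QS = F₂ := by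
        intro F₁ F₂ h₁ h₂ heq
        by_contra hne
        push_neg at hne
        have hQ1 : QS ⊆ F₁ := heq ▸ Set.inter_subset_left
        have hQ2 : QS ⊆ F₂ := heq ▸ Set.inter_subset_right
        obtain ⟨x, hx1, hxQ⟩ := Set.exists_of_ssubset (hQ1.ssubset_of_ne hne.1)
        obtain ⟨y, hy2, hyQ⟩ := Set.exists_of_ssubset (hQ2.ssubset_of_ne hne.2)
        have hbx : beta x ∪ beta y ∉ PP := by
          intro h
          rcases hprime _ (beta_mem_Dlat x) _ (beta_mem_Dlat y) h with h | h
          exacts [hxQ h, hyQ h]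
        obtain ⟨X, ⟨_, l, hl, hXl⟩, W, hW, hsub⟩ :=
          hext (beta x ∪ beta y) (union_mem_Dlat (beta_mem_Dlat x) (beta_mem_Dlat y)) hbx
        obtain ⟨T, rfl⟩ := hPD hW
        obtain ⟨u, hu, huP⟩ := hbeta_mem T hW
        have huQ : u ∈ QS := huP
        have hux : u ⊓ x ≤ l := by
          rw [← beta_le_iff hA, beta_inf]
          intro p hp
          exact hXl (hsub ⟨Set.mem_iUnion₂.mpr ⟨u, hu, hp.1⟩, Set.mem_union_left _ hp.2⟩)
        have huy : u ⊓ y ≤ l := by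
          rw [← beta_le_iff hA, beta_inf]
          intro p hp
          exact hXl (hsub ⟨Set.mem_iUnion₂.mpr ⟨u, hu, hp.1⟩, Set.mem_union_right _ hp.2⟩)
        have hlF1 : l ∈ F₁ := h₁.1 hux (h₁.2.2 (hQ1 huQ) hx1)
        have hlF2 : l ∈ F₂ := h₂.1 huy (h₂.2.2 (hQ2 huQ) hy2)
        have : l ∈ QS := by rw [heq]; exact ⟨hlF1, hlF2⟩
        exact hlQ l hl this
      set Q : Spec A := ⟨QS, hQfilt, hQne, hQirr⟩ with hQdef
      have hQZ : Q ∈ Z := by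
        rw [hZL]
        exact Set.mem_iInter₂.mpr fun l hl => hlQ l hl
      have hQY : Q ∈ Y := by
        by_contra hQY
        have hopen : TopologicalSpace.GenerateOpen
            {s : Set (Spec A) | ∃ a : A, s = (beta a)ᶜ} Yᶜ := by
          letI := specTop A
          exact hY.isOpen_compl
        obtain ⟨T, hTQ, hTY⟩ := gen_open_nbhd hopen Q hQY
        have hcov : (⋃ a ∈ T, beta a) ∈ {U | U ∈ Dlat A ∧ Y ⊆ U} := by
          refine ⟨⟨T, rfl⟩, ?_⟩
          intro R hR
          by_contra hn
          exact (hTY R fun a ha haR => hn (Set.mem_iUnion₂.mpr ⟨a, ha, haR⟩)) hR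
        obtain ⟨a, ha, haP⟩ := hbeta_mem T (hPF hcov)
        exact hTQ a ha haP
      exact ⟨Q, hQY, hQZ⟩
  · rintro ⟨P, hPY, hPZ⟩
    refine Set.eq_empty_iff_forall_notMem.mpr ?_
    rintro a ⟨hFa, hIa⟩
    have hmem : P ∈ beta a ∩ Z := ⟨hFa hPY, hPZ⟩
    rw [show beta a ∩ Z = ∅ from hIa] at hmem
    exact hmem
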